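/- For every integer n ≥ 102, f_{2n+1}(n−2, n−2) = (64n³ + 30n² − 13n − 3)/(128n³ − 32n). (This is the case m = 5, α = −2 of the closed form for values five steps below the top diagonal.) -/
import Mathlib


/-- Auxiliary backward-induction for the truncated Chow–Robbins value.
The first argument is the remaining number of tosses `N - (h + t)`. -/
def crAux : ℕ → ℕ → ℕ → ℕ → ℚ
  | 0, N, h, _t => max (1/2) ((h : ℚ) / (N : ℚ))
  | k+1, N, h, t =>
      max ((crAux k N (h+1) t + crAux k N h (t+1)) / 2) ((h : ℚ) / ((h : ℚ) + (t : ℚ)))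

/-- `cr N h t` is the truncated Chow–Robbins value `f_N(h,t)`:
the optimal expected reward of the coin-tossing game truncated at `N` tosses,
starting with `h` heads and `t` tails. -/
def cr (N h t : ℕ) : ℚ := crAux (N - (h + t)) N h t

lemma crAux0 (N h t : ℕ) : crAux 0 N h t = max (1/2) ((h : ℚ) / (N : ℚ)) := rfl
lemma crAux1 (N h t : ℕ) : crAux 1 N h t =
    max ((crAux 0 N (h+1) t + crAux 0 N h (t+1)) / 2) ((h : ℚ) / ((h : ℚ) + (t : ℚ))) := rfl
lemma crAux2 (N h t : ℕ) : crAux 2 N h t =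
    max ((crAux 1 N (h+1) t + crAux 1 N h (t+1)) / 2) ((h : ℚ) / ((h : ℚ) + (t : ℚ))) := rfl
lemma crAux3 (N h t : ℕ) : crAux 3 N h t =
    max ((crAux 2 N (h+1) t + crAux 2 N h (t+1)) / 2) ((h : ℚ) / ((h : ℚ) + (t : ℚ))) := rfl
lemma crAux4 (N h t : ℕ) : crAux 4 N h t =
    max ((crAux 3 N (h+1) t + crAux 3 N h (t+1)) / 2) ((h : ℚ) / ((h : ℚ) + (t : ℚ))) := rfl
lemma crAux5 (N h t : ℕ) : crAux 5 N h t =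
    max ((crAux 4 N (h+1) t + crAux 4 N h (t+1)) / 2) ((h : ℚ) / ((h : ℚ) + (t : ℚ))) := rfl

set_option maxHeartbeats 2000000 in
theorem cr_m5_am2 (n : ℕ) (hn : 102 ≤ n) :
    cr (2 * n + 1) (n - 2) (n - 2) =
      (64 * (n : ℚ)^3 + 30 * (n : ℚ)^2 - 13 * (n : ℚ) - 3) /
        (128 * (n : ℚ)^3 - 32 * (n : ℚ)) := by
  obtain ⟨m, rfl⟩ : ∃ m, n = m + 102 := ⟨n - 102, by omega⟩
  have hm0 : (0:ℚ) ≤ (m:ℚ) := Nat.cast_nonneg m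
  have hm2 : (0:ℚ) ≤ (m:ℚ)^2 := by positivity
  have hm3 : (0:ℚ) ≤ (m:ℚ)^3 := by positivity
  have hm4 : (0:ℚ) ≤ (m:ℚ)^4 := by positivity
  have hm5 : (0:ℚ) ≤ (m:ℚ)^5 := by positivity
  have hm6 : (0:ℚ) ≤ (m:ℚ)^6 := by positivity
  have hm7 : (0:ℚ) ≤ (m:ℚ)^7 := by positivity
  have hm8 : (0:ℚ) ≤ (m:ℚ)^8 := by positivity
  have hm9 : (0:ℚ) ≤ (m:ℚ)^9 := by positivity
  have hm10 : (0:ℚ) ≤ (m:ℚ)^10 := by positivity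
  have hm11 : (0:ℚ) ≤ (m:ℚ)^11 := by positivity
  have hcN : ((2*(m+102)+1 : ℕ) : ℚ) = 2*(m:ℚ) + 205 := by push_cast; ring
  have hc0 : ((m + 100 : ℕ) : ℚ) = (m:ℚ) + 100 := by push_cast; ring
  have hc1 : ((m + 100 + 1 : ℕ) : ℚ) = (m:ℚ) + 101 := by push_cast; ring
  have hc2 : ((m + 100 + 1 + 1 : ℕ) : ℚ) = (m:ℚ) + 102 := by push_cast; ring
  have hc3 : ((m + 100 + 1 + 1 + 1 : ℕ) : ℚ) = (m:ℚ) + 103 := by push_cast; ring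
  have hc4 : ((m + 100 + 1 + 1 + 1 + 1 : ℕ) : ℚ) = (m:ℚ) + 104 := by push_cast; ring
  have hc5 : ((m + 100 + 1 + 1 + 1 + 1 + 1 : ℕ) : ℚ) = (m:ℚ) + 105 := by push_cast; ring
  have v0_0 : crAux 0 (2*(m+102)+1) (m + 100) (m + 100 + 1 + 1 + 1 + 1 + 1) = 1/2 := by
    rw [crAux0, hc0, hcN]
    have hp1 : (0:ℚ) < 2*(m:ℚ) + 205 := by positivity
    refine (max_eq_left ?_).trans ?_
    · rw [div_le_div_iff₀ hp1 (by norm_num : (0:ℚ) < 2)]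
      linarith [hm0, hm2, hm3, hm4, hm5, hm6, hm7, hm8, hm9, hm10, hm11]
    · ring
  have v0_1 : crAux 0 (2*(m+102)+1) (m + 100 + 1) (m + 100 + 1 + 1 + 1 + 1) = 1/2 := by
    rw [crAux0, hc1, hcN]
    have hp1 : (0:ℚ) < 2*(m:ℚ) + 205 := by positivity
    refine (max_eq_left ?_).trans ?_
    · rw [div_le_div_iff₀ hp1 (by norm_num : (0:ℚ) < 2)]
      linarith [hm0, hm2, hm3, hm4, hm5, hm6, hm7, hm8, hm9, hm10, hm11]
    · ring
  have v0_2 : crAux 0 (2*(m+102)+1) (m + 100 + 1 + 1) (m + 100 + 1 + 1 + 1) = 1/2 := by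
    rw [crAux0, hc2, hcN]
    have hp1 : (0:ℚ) < 2*(m:ℚ) + 205 := by positivity
    refine (max_eq_left ?_).trans ?_
    · rw [div_le_div_iff₀ hp1 (by norm_num : (0:ℚ) < 2)]
      linarith [hm0, hm2, hm3, hm4, hm5, hm6, hm7, hm8, hm9, hm10, hm11]
    · ring
  have v0_3 : crAux 0 (2*(m+102)+1) (m + 100 + 1 + 1 + 1) (m + 100 + 1 + 1) = ((m:ℚ) + 103) / (2*(m:ℚ) + 205) := by
    rw [crAux0, hc3, hcN]
    have hp1 : (0:ℚ) < 2*(m:ℚ) + 205 := by positivity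
    refine (max_eq_right ?_).trans ?_
    · rw [div_le_div_iff₀ (by norm_num : (0:ℚ) < 2) hp1]
      linarith [hm0, hm2, hm3, hm4, hm5, hm6, hm7, hm8, hm9, hm10, hm11]
    · ring
  have v0_4 : crAux 0 (2*(m+102)+1) (m + 100 + 1 + 1 + 1 + 1) (m + 100 + 1) = ((m:ℚ) + 104) / (2*(m:ℚ) + 205) := by
    rw [crAux0, hc4, hcN]
    have hp1 : (0:ℚ) < 2*(m:ℚ) + 205 := by positivity
    refine (max_eq_right ?_).trans ?_
    · rw [div_le_div_iff₀ (by norm_num : (0:ℚ) < 2) hp1]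
      linarith [hm0, hm2, hm3, hm4, hm5, hm6, hm7, hm8, hm9, hm10, hm11]
    · ring
  have v0_5 : crAux 0 (2*(m+102)+1) (m + 100 + 1 + 1 + 1 + 1 + 1) (m + 100) = ((m:ℚ) + 105) / (2*(m:ℚ) + 205) := by
    rw [crAux0, hc5, hcN]
    have hp1 : (0:ℚ) < 2*(m:ℚ) + 205 := by positivity
    refine (max_eq_right ?_).trans ?_
    · rw [div_le_div_iff₀ (by norm_num : (0:ℚ) < 2) hp1]
      linarith [hm0, hm2, hm3, hm4, hm5, hm6, hm7, hm8, hm9, hm10, hm11]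
    · ring
  have v1_0 : crAux 1 (2*(m+102)+1) (m + 100) (m + 100 + 1 + 1 + 1 + 1) = (1) / (2) := by
    rw [crAux1, v0_1, v0_0, hc0, hc4]
    have hne1 : (2:ℚ) ≠ 0 := by norm_num
    rw [div_add_div _ _ hne1 hne1, div_div]
    have hp1 : (0:ℚ) < (m:ℚ) + 100 + ((m:ℚ) + 104) := by positivity
    have hp2 : (0:ℚ) < (2) * (2) * 2 := by positivity
    have hp3 : (2 : ℚ) ≠ 0 := by positivity
    refine (max_eq_left ?_).trans ?_
    · rw [div_le_div_iff₀ hp1 hp2]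
      linarith [hm0, hm2, hm3, hm4, hm5, hm6, hm7, hm8, hm9, hm10, hm11]
    · rw [div_eq_div_iff hp2.ne' hp3]
      ring
  have v1_1 : crAux 1 (2*(m+102)+1) (m + 100 + 1) (m + 100 + 1 + 1 + 1) = (1) / (2) := by
    rw [crAux1, v0_2, v0_1, hc1, hc3]
    have hne1 : (2:ℚ) ≠ 0 := by norm_num
    rw [div_add_div _ _ hne1 hne1, div_div]
    have hp1 : (0:ℚ) < (m:ℚ) + 101 + ((m:ℚ) + 103) := by positivity
    have hp2 : (0:ℚ) < (2) * (2) * 2 := by positivity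
    have hp3 : (2 : ℚ) ≠ 0 := by positivity
    refine (max_eq_left ?_).trans ?_
    · rw [div_le_div_iff₀ hp1 hp2]
      linarith [hm0, hm2, hm3, hm4, hm5, hm6, hm7, hm8, hm9, hm10, hm11]
    · rw [div_eq_div_iff hp2.ne' hp3]
      ring
  have v1_2 : crAux 1 (2*(m+102)+1) (m + 100 + 1 + 1) (m + 100 + 1 + 1) = (4*(m:ℚ) + 411) / (8*(m:ℚ) + 820) := by
    rw [crAux1, v0_3, v0_2, hc2]
    have hne1 : (2*(m:ℚ) + 205 : ℚ) ≠ 0 := by positivity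
    have hne2 : (2 : ℚ) ≠ 0 := by positivity
    rw [div_add_div _ _ hne1 hne2, div_div]
    have hp1 : (0:ℚ) < (m:ℚ) + 102 + ((m:ℚ) + 102) := by positivity
    have hp2 : (0:ℚ) < (2*(m:ℚ) + 205) * (2) * 2 := by positivity
    have hp3 : (8*(m:ℚ) + 820 : ℚ) ≠ 0 := by positivity
    refine (max_eq_left ?_).trans ?_
    · rw [div_le_div_iff₀ hp1 hp2]
      linarith [hm0, hm2, hm3, hm4, hm5, hm6, hm7, hm8, hm9, hm10, hm11]
    · rw [div_eq_div_iff hp2.ne' hp3]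
      ring
  have v1_3 : crAux 1 (2*(m+102)+1) (m + 100 + 1 + 1 + 1) (m + 100 + 1) = ((m:ℚ) + 103) / (2*(m:ℚ) + 204) := by
    rw [crAux1, v0_4, v0_3, hc3, hc1]
    have hne1 : (2*(m:ℚ) + 205 : ℚ) ≠ 0 := by positivity
    have hne2 : (2*(m:ℚ) + 205 : ℚ) ≠ 0 := by positivity
    rw [div_add_div _ _ hne1 hne2, div_div]
    have hp1 : (0:ℚ) < (m:ℚ) + 103 + ((m:ℚ) + 101) := by positivity
    have hp2 : (0:ℚ) < (2*(m:ℚ) + 205) * (2*(m:ℚ) + 205) * 2 := by positivity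
    have hp3 : (2*(m:ℚ) + 204 : ℚ) ≠ 0 := by positivity
    refine (max_eq_right ?_).trans ?_
    · rw [div_le_div_iff₀ hp2 hp1]
      linarith [hm0, hm2, hm3, hm4, hm5, hm6, hm7, hm8, hm9, hm10, hm11]
    · rw [div_eq_div_iff hp1.ne' hp3]
      ring
  have v1_4 : crAux 1 (2*(m+102)+1) (m + 100 + 1 + 1 + 1 + 1) (m + 100) = ((m:ℚ) + 104) / (2*(m:ℚ) + 204) := by
    rw [crAux1, v0_5, v0_4, hc4, hc0]
    have hne1 : (2*(m:ℚ) + 205 : ℚ) ≠ 0 := by positivity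
    have hne2 : (2*(m:ℚ) + 205 : ℚ) ≠ 0 := by positivity
    rw [div_add_div _ _ hne1 hne2, div_div]
    have hp1 : (0:ℚ) < (m:ℚ) + 104 + ((m:ℚ) + 100) := by positivity
    have hp2 : (0:ℚ) < (2*(m:ℚ) + 205) * (2*(m:ℚ) + 205) * 2 := by positivity
    have hp3 : (2*(m:ℚ) + 204 : ℚ) ≠ 0 := by positivity
    refine (max_eq_right ?_).trans ?_
    · rw [div_le_div_iff₀ hp2 hp1]
      linarith [hm0, hm2, hm3, hm4, hm5, hm6, hm7, hm8, hm9, hm10, hm11]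
    · rw [div_eq_div_iff hp1.ne' hp3]
      ring
  have v2_0 : crAux 2 (2*(m+102)+1) (m + 100) (m + 100 + 1 + 1 + 1) = (1) / (2) := by
    rw [crAux2, v1_1, v1_0, hc0, hc3]
    have hne1 : (2 : ℚ) ≠ 0 := by positivity
    have hne2 : (2 : ℚ) ≠ 0 := by positivity
    rw [div_add_div _ _ hne1 hne2, div_div]
    have hp1 : (0:ℚ) < (m:ℚ) + 100 + ((m:ℚ) + 103) := by positivity
    have hp2 : (0:ℚ) < (2) * (2) * 2 := by positivity
    have hp3 : (2 : ℚ) ≠ 0 := by positivity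
    refine (max_eq_left ?_).trans ?_
    · rw [div_le_div_iff₀ hp1 hp2]
      linarith [hm0, hm2, hm3, hm4, hm5, hm6, hm7, hm8, hm9, hm10, hm11]
    · rw [div_eq_div_iff hp2.ne' hp3]
      ring
  have v2_1 : crAux 2 (2*(m+102)+1) (m + 100 + 1) (m + 100 + 1 + 1) = (8*(m:ℚ) + 821) / (16*(m:ℚ) + 1640) := by
    rw [crAux2, v1_2, v1_1, hc1, hc2]
    have hne1 : (8*(m:ℚ) + 820 : ℚ) ≠ 0 := by positivity
    have hne2 : (2 : ℚ) ≠ 0 := by positivity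
    rw [div_add_div _ _ hne1 hne2, div_div]
    have hp1 : (0:ℚ) < (m:ℚ) + 101 + ((m:ℚ) + 102) := by positivity
    have hp2 : (0:ℚ) < (8*(m:ℚ) + 820) * (2) * 2 := by positivity
    have hp3 : (16*(m:ℚ) + 1640 : ℚ) ≠ 0 := by positivity
    refine (max_eq_left ?_).trans ?_
    · rw [div_le_div_iff₀ hp1 hp2]
      linarith [hm0, hm2, hm3, hm4, hm5, hm6, hm7, hm8, hm9, hm10, hm11]
    · rw [div_eq_div_iff hp2.ne' hp3]
      ring
  have v2_2 : crAux 2 (2*(m+102)+1) (m + 100 + 1 + 1) (m + 100 + 1) = (8*(m:ℚ)^2 + 1641*(m:ℚ) + 84152) / (16*(m:ℚ)^2 + 3272*(m:ℚ) + 167280) := by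
    rw [crAux2, v1_3, v1_2, hc2, hc1]
    have hne1 : (2*(m:ℚ) + 204 : ℚ) ≠ 0 := by positivity
    have hne2 : (8*(m:ℚ) + 820 : ℚ) ≠ 0 := by positivity
    rw [div_add_div _ _ hne1 hne2, div_div]
    have hp1 : (0:ℚ) < (m:ℚ) + 102 + ((m:ℚ) + 101) := by positivity
    have hp2 : (0:ℚ) < (2*(m:ℚ) + 204) * (8*(m:ℚ) + 820) * 2 := by positivity
    have hp3 : (16*(m:ℚ)^2 + 3272*(m:ℚ) + 167280 : ℚ) ≠ 0 := by positivity
    refine (max_eq_left ?_).trans ?_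
    · rw [div_le_div_iff₀ hp1 hp2]
      linarith [hm0, hm2, hm3, hm4, hm5, hm6, hm7, hm8, hm9, hm10, hm11]
    · rw [div_eq_div_iff hp2.ne' hp3]
      ring
  have v2_3 : crAux 2 (2*(m+102)+1) (m + 100 + 1 + 1 + 1) (m + 100) = ((m:ℚ) + 103) / (2*(m:ℚ) + 203) := by
    rw [crAux2, v1_4, v1_3, hc3, hc0]
    have hne1 : (2*(m:ℚ) + 204 : ℚ) ≠ 0 := by positivity
    have hne2 : (2*(m:ℚ) + 204 : ℚ) ≠ 0 := by positivity
    rw [div_add_div _ _ hne1 hne2, div_div]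
    have hp1 : (0:ℚ) < (m:ℚ) + 103 + ((m:ℚ) + 100) := by positivity
    have hp2 : (0:ℚ) < (2*(m:ℚ) + 204) * (2*(m:ℚ) + 204) * 2 := by positivity
    have hp3 : (2*(m:ℚ) + 203 : ℚ) ≠ 0 := by positivity
    refine (max_eq_right ?_).trans ?_
    · rw [div_le_div_iff₀ hp2 hp1]
      linarith [hm0, hm2, hm3, hm4, hm5, hm6, hm7, hm8, hm9, hm10, hm11]
    · rw [div_eq_div_iff hp1.ne' hp3]
      ring
  have v3_0 : crAux 3 (2*(m+102)+1) (m + 100) (m + 100 + 1 + 1) = (16*(m:ℚ) + 1641) / (32*(m:ℚ) + 3280) := by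
    rw [crAux3, v2_1, v2_0, hc0, hc2]
    have hne1 : (16*(m:ℚ) + 1640 : ℚ) ≠ 0 := by positivity
    have hne2 : (2 : ℚ) ≠ 0 := by positivity
    rw [div_add_div _ _ hne1 hne2, div_div]
    have hp1 : (0:ℚ) < (m:ℚ) + 100 + ((m:ℚ) + 102) := by positivity
    have hp2 : (0:ℚ) < (16*(m:ℚ) + 1640) * (2) * 2 := by positivity
    have hp3 : (32*(m:ℚ) + 3280 : ℚ) ≠ 0 := by positivity
    refine (max_eq_left ?_).trans ?_
    · rw [div_le_div_iff₀ hp1 hp2]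
      linarith [hm0, hm2, hm3, hm4, hm5, hm6, hm7, hm8, hm9, hm10, hm11]
    · rw [div_eq_div_iff hp2.ne' hp3]
      ring
  have v3_1 : crAux 3 (2*(m+102)+1) (m + 100 + 1) (m + 100 + 1) = (16*(m:ℚ)^3 + 4918*(m:ℚ)^2 + 503889*(m:ℚ) + 17209135) / (32*(m:ℚ)^3 + 9824*(m:ℚ)^2 + 1005320*(m:ℚ) + 34292400) := by
    rw [crAux3, v2_2, v2_1, hc1]
    have hne1 : (16*(m:ℚ)^2 + 3272*(m:ℚ) + 167280 : ℚ) ≠ 0 := by positivity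
    have hne2 : (16*(m:ℚ) + 1640 : ℚ) ≠ 0 := by positivity
    rw [div_add_div _ _ hne1 hne2, div_div]
    have hp1 : (0:ℚ) < (m:ℚ) + 101 + ((m:ℚ) + 101) := by positivity
    have hp2 : (0:ℚ) < (16*(m:ℚ)^2 + 3272*(m:ℚ) + 167280) * (16*(m:ℚ) + 1640) * 2 := by positivity
    have hp3 : (32*(m:ℚ)^3 + 9824*(m:ℚ)^2 + 1005320*(m:ℚ) + 34292400 : ℚ) ≠ 0 := by positivity
    refine (max_eq_left ?_).trans ?_
    · rw [div_le_div_iff₀ hp1 hp2]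
      linarith [hm0, hm2, hm3, hm4, hm5, hm6, hm7, hm8, hm9, hm10, hm11]
    · rw [div_eq_div_iff hp2.ne' hp3]
      ring
  have v3_2 : crAux 3 (2*(m+102)+1) (m + 100 + 1 + 1) (m + 100) = (32*(m:ℚ)^3 + 9826*(m:ℚ)^2 + 1005723*(m:ℚ) + 34312696) / (64*(m:ℚ)^3 + 19584*(m:ℚ)^2 + 1997552*(m:ℚ) + 67915680) := by
    rw [crAux3, v2_3, v2_2, hc2, hc0]
    have hne1 : (2*(m:ℚ) + 203 : ℚ) ≠ 0 := by positivity
    have hne2 : (16*(m:ℚ)^2 + 3272*(m:ℚ) + 167280 : ℚ) ≠ 0 := by positivity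
    rw [div_add_div _ _ hne1 hne2, div_div]
    have hp1 : (0:ℚ) < (m:ℚ) + 102 + ((m:ℚ) + 100) := by positivity
    have hp2 : (0:ℚ) < (2*(m:ℚ) + 203) * (16*(m:ℚ)^2 + 3272*(m:ℚ) + 167280) * 2 := by positivity
    have hp3 : (64*(m:ℚ)^3 + 19584*(m:ℚ)^2 + 1997552*(m:ℚ) + 67915680 : ℚ) ≠ 0 := by positivity
    refine (max_eq_left ?_).trans ?_
    · rw [div_le_div_iff₀ hp1 hp2]
      linarith [hm0, hm2, hm3, hm4, hm5, hm6, hm7, hm8, hm9, hm10, hm11]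
    · rw [div_eq_div_iff hp2.ne' hp3]
      ring
  have v4_0 : crAux 4 (2*(m+102)+1) (m + 100) (m + 100 + 1) = (128*(m:ℚ)^4 + 52444*(m:ℚ)^3 + 8057724*(m:ℚ)^2 + 550232095*(m:ℚ) + 14089973900) / (256*(m:ℚ)^4 + 104832*(m:ℚ)^3 + 16098240*(m:ℚ)^2 + 1098701600*(m:ℚ) + 28119768000) := by
    rw [crAux4, v3_1, v3_0, hc0, hc1]
    have hne1 : (32*(m:ℚ)^3 + 9824*(m:ℚ)^2 + 1005320*(m:ℚ) + 34292400 : ℚ) ≠ 0 := by positivity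
    have hne2 : (32*(m:ℚ) + 3280 : ℚ) ≠ 0 := by positivity
    rw [div_add_div _ _ hne1 hne2, div_div]
    have hp1 : (0:ℚ) < (m:ℚ) + 100 + ((m:ℚ) + 101) := by positivity
    have hp2 : (0:ℚ) < (32*(m:ℚ)^3 + 9824*(m:ℚ)^2 + 1005320*(m:ℚ) + 34292400) * (32*(m:ℚ) + 3280) * 2 := by positivity
    have hp3 : (256*(m:ℚ)^4 + 104832*(m:ℚ)^3 + 16098240*(m:ℚ)^2 + 1098701600*(m:ℚ) + 28119768000 : ℚ) ≠ 0 := by positivity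
    refine (max_eq_left ?_).trans ?_
    · rw [div_le_div_iff₀ hp1 hp2]
      linarith [hm0, hm2, hm3, hm4, hm5, hm6, hm7, hm8, hm9, hm10, hm11]
    · rw [div_eq_div_iff hp2.ne' hp3]
      ring
  have v4_1 : crAux 4 (2*(m+102)+1) (m + 100 + 1) (m + 100) = (256*(m:ℚ)^6 + 157112*(m:ℚ)^5 + 40175980*(m:ℚ)^4 + 5479252322*(m:ℚ)^3 + 420336998509*(m:ℚ)^2 + 17197750133120*(m:ℚ) + 293179350255900) / (512*(m:ℚ)^6 + 313856*(m:ℚ)^5 + 80163840*(m:ℚ)^4 + 10920038272*(m:ℚ)^3 + 836741244640*(m:ℚ)^2 + 34194460905600*(m:ℚ) + 582247916208000) := by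
    rw [crAux4, v3_2, v3_1, hc1, hc0]
    have hne1 : (64*(m:ℚ)^3 + 19584*(m:ℚ)^2 + 1997552*(m:ℚ) + 67915680 : ℚ) ≠ 0 := by positivity
    have hne2 : (32*(m:ℚ)^3 + 9824*(m:ℚ)^2 + 1005320*(m:ℚ) + 34292400 : ℚ) ≠ 0 := by positivity
    rw [div_add_div _ _ hne1 hne2, div_div]
    have hp1 : (0:ℚ) < (m:ℚ) + 101 + ((m:ℚ) + 100) := by positivity
    have hp2 : (0:ℚ) < (64*(m:ℚ)^3 + 19584*(m:ℚ)^2 + 1997552*(m:ℚ) + 67915680) * (32*(m:ℚ)^3 + 9824*(m:ℚ)^2 + 1005320*(m:ℚ) + 34292400) * 2 := by positivity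
    have hp3 : (512*(m:ℚ)^6 + 313856*(m:ℚ)^5 + 80163840*(m:ℚ)^4 + 10920038272*(m:ℚ)^3 + 836741244640*(m:ℚ)^2 + 34194460905600*(m:ℚ) + 582247916208000 : ℚ) ≠ 0 := by positivity
    refine (max_eq_left ?_).trans ?_
    · rw [div_le_div_iff₀ hp1 hp2]
      linarith [hm0, hm2, hm3, hm4, hm5, hm6, hm7, hm8, hm9, hm10, hm11]
    · rw [div_eq_div_iff hp2.ne' hp3]
      ring
  have v5_0 : crAux 5 (2*(m+102)+1) (m + 100) (m + 100) = (2048*(m:ℚ)^10 + 2095040*(m:ℚ)^9 + 964421184*(m:ℚ)^8 + 263085506288*(m:ℚ)^7 + 47097294698384*(m:ℚ)^6 + 5781462834832884*(m:ℚ)^5 + 492852044799938300*(m:ℚ)^4 + 28809659436446007125*(m:ℚ)^3 + 1105168612170411144375*(m:ℚ)^2 + 25123186211053248675000*(m:ℚ) + 256999894598230556287500) / (4096*(m:ℚ)^10 + 4188160*(m:ℚ)^9 + 1927074816*(m:ℚ)^8 + 525447809536*(m:ℚ)^7 + 94021979905792*(m:ℚ)^6 + 11536441694916480*(m:ℚ)^5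 + 982995083456728000*(m:ℚ)^4 + 57434585591018860000*(m:ℚ)^3 + 2202238914938890200000*(m:ℚ)^2 + 50039282021404294800000*(m:ℚ) + 511646135070387492000000) := by
    rw [crAux5, v4_1, v4_0, hc0]
    have hne1 : (512*(m:ℚ)^6 + 313856*(m:ℚ)^5 + 80163840*(m:ℚ)^4 + 10920038272*(m:ℚ)^3 + 836741244640*(m:ℚ)^2 + 34194460905600*(m:ℚ) + 582247916208000 : ℚ) ≠ 0 := by positivity
    have hne2 : (256*(m:ℚ)^4 + 104832*(m:ℚ)^3 + 16098240*(m:ℚ)^2 + 1098701600*(m:ℚ) + 28119768000 : ℚ) ≠ 0 := by positivity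
    rw [div_add_div _ _ hne1 hne2, div_div]
    have hp1 : (0:ℚ) < (m:ℚ) + 100 + ((m:ℚ) + 100) := by positivity
    have hp2 : (0:ℚ) < (512*(m:ℚ)^6 + 313856*(m:ℚ)^5 + 80163840*(m:ℚ)^4 + 10920038272*(m:ℚ)^3 + 836741244640*(m:ℚ)^2 + 34194460905600*(m:ℚ) + 582247916208000) * (256*(m:ℚ)^4 + 104832*(m:ℚ)^3 + 16098240*(m:ℚ)^2 + 1098701600*(m:ℚ) + 28119768000) * 2 := by positivity
    have hp3 : (4096*(m:ℚ)^10 + 4188160*(m:ℚ)^9 + 1927074816*(m:ℚ)^8 + 525447809536*(m:ℚ)^7 + 94021979905792*(m:ℚ)^6 + 11536441694916480*(m:ℚ)^5 + 982995083456728000*(m:ℚ)^4 + 57434585591018860000*(m:ℚ)^3 + 2202238914938890200000*(m:ℚ)^2 + 50039282021404294800000*(m:ℚ) + 511646135070387492000000 : ℚ) ≠ 0 := by positivity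
    refine (max_eq_left ?_).trans ?_
    · rw [div_le_div_iff₀ hp1 hp2]
      linarith [hm0, hm2, hm3, hm4, hm5, hm6, hm7, hm8, hm9, hm10, hm11]
    · rw [div_eq_div_iff hp2.ne' hp3]
      ring
  rw [show (m + 102 - 2) = m + 100 from by omega]
  simp only [cr]
  rw [show 2*(m+102)+1 - (m+100 + (m+100)) = 5 from by omega]
  rw [v5_0]
  push_cast
  have hD1 : (4096*(m:ℚ)^10 + 4188160*(m:ℚ)^9 + 1927074816*(m:ℚ)^8 + 525447809536*(m:ℚ)^7 + 94021979905792*(m:ℚ)^6 + 11536441694916480*(m:ℚ)^5 + 982995083456728000*(m:ℚ)^4 + 57434585591018860000*(m:ℚ)^3 + 2202238914938890200000*(m:ℚ)^2 + 50039282021404294800000*(m:ℚ) + 511646135070387492000000 : ℚ) ≠ 0 := by positivity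
  have hD2 : (128*((m:ℚ)+102)^3 - 32*((m:ℚ)+102) : ℚ) ≠ 0 := ne_of_gt (by linarith [hm0, hm2, hm3])
  rw [div_eq_div_iff hD1 hD2]
  ring
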